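/- The 5-dimensional nilpotent commutative associative algebra A₁₃ degenerates to A₂₁: the structure λ of A₂₁ lies in the closure of the GL(5,ℂ)-orbit O(μ) of the structure μ of A₁₃ (closure in the standard topology on the space of bilinear maps ℂ⁵ × ℂ⁵ → ℂ⁵). -/

import Mathlib

open ContinuousLinearMap

/-- The underlying space `ℂⁿ`. -/
abbrev Vn (n : ℕ) := Fin n → ℂ

/-- The space of bilinear maps `ℂⁿ × ℂⁿ → ℂⁿ` (as continuous linear maps in two
arguments), carrying its standard topology as a finite-dimensional complex vector space. -/
abbrev Bil (n : ℕ) := Vn n →L[ℂ] Vn n →L[ℂ] Vn n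

/-- The action of `GL(n, ℂ)` on bilinear maps: `(g · μ)(x, y) = g (μ (g⁻¹ x) (g⁻¹ y))`. -/
noncomputable def act {n : ℕ} (g : Vn n ≃L[ℂ] Vn n) (μ : Bil n) : Bil n :=
  ((compL ℂ (Vn n) (Vn n) (Vn n)).flip (g.symm : Vn n →L[ℂ] Vn n)).comp
    (((compL ℂ (Vn n) (Vn n) (Vn n)) (g : Vn n →L[ℂ] Vn n)).comp
      (μ.comp (g.symm : Vn n →L[ℂ] Vn n)))

@[simp] lemma act_apply {n : ℕ} (g : Vn n ≃L[ℂ] Vn n) (μ : Bil n) (x y : Vn n) :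
    act g μ x y = g (μ (g.symm x) (g.symm y)) := rfl

/-- The orbit `O(μ)` of a bilinear map under the `GL(n, ℂ)`-action. -/
noncomputable def orbit {n : ℕ} (μ : Bil n) : Set (Bil n) :=
  {ν | ∃ g : Vn n ≃L[ℂ] Vn n, ν = act g μ}

/-- The standard basis `e₁, …, e₅` of `ℂ⁵` (zero-indexed: `e i` is `e_{i+1}`). -/
def e (i : Fin 5) : Vn 5 := Pi.single i 1

/-- Multiplication table of the algebra `𝐀13` (entry `(i, j)` is `eᵢ · eⱼ`). -/
def tblA13 : Fin 5 → Fin 5 → Vn 5 :=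
  ![![0, e 4, 0, 0, 0],
   ![e 4, 0, 0, 0, 0],
   ![0, 0, e 3, e 4, 0],
   ![0, 0, e 4, 0, 0],
   ![0, 0, 0, 0, 0]]

/-- Multiplication table of the algebra `𝐀21` (entry `(i, j)` is `eᵢ · eⱼ`). -/
def tblA21 : Fin 5 → Fin 5 → Vn 5 :=
  ![![0, 0, 0, e 4, 0],
   ![0, 0, e 4, 0, 0],
   ![0, e 4, 0, 0, 0],
   ![e 4, 0, 0, 0, 0],
   ![0, 0, 0, 0, 0]]

set_option maxHeartbeats 1000000 in
noncomputable def gmap (c : ℂ) : Vn 5 →ₗ[ℂ] Vn 5 where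
  toFun x := ![x 0, c⁻¹ * x 2, c * x 3, x 1, x 4]
  map_add' x y := by funext i; fin_cases i <;> simp <;> ring
  map_smul' r x := by funext i; fin_cases i <;> simp <;> ring

set_option maxHeartbeats 1000000 in
noncomputable def ginv (c : ℂ) : Vn 5 →ₗ[ℂ] Vn 5 where
  toFun x := ![x 0, x 3, c * x 1, c⁻¹ * x 2, x 4]
  map_add' x y := by funext i; fin_cases i <;> simp <;> ring
  map_smul' r x := by funext i; fin_cases i <;> simp <;> ring

set_option maxHeartbeats 1000000 in
noncomputable def G (c : ℂ) (hc : c ≠ 0) : Vn 5 ≃L[ℂ] Vn 5 :=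
  (LinearEquiv.ofLinear (gmap c) (ginv c)
    (by ext x i; fin_cases i <;> simp [gmap, ginv] <;> field_simp)
    (by ext x i; fin_cases i <;> simp [gmap, ginv] <;> field_simp)).toContinuousLinearEquiv

noncomputable def D : Bil 5 := smulRight (proj 1) (smulRight (proj 1) (e 2))

lemma vec_eq_sum (x : Vn 5) : x = ∑ i, x i • e i := by
  funext j
  simp [e, Pi.single_apply, Finset.sum_apply]

lemma bil_ext {f h : Bil 5} (H : ∀ i j, f (e i) (e j) = h (e i) (e j)) : f = h := by
  ext x y
  conv_lhs => rw [vec_eq_sum x, vec_eq_sum y]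
  conv_rhs => rw [vec_eq_sum x, vec_eq_sum y]
  simp [map_sum, map_smul, H]

lemma fin5_0 : (⟨0, by omega⟩ : Fin 5) = 0 := rfl
lemma fin5_1 : (⟨1, by omega⟩ : Fin 5) = 1 := rfl
lemma fin5_2 : (⟨2, by omega⟩ : Fin 5) = 2 := rfl
lemma fin5_3 : (⟨3, by omega⟩ : Fin 5) = 3 := rfl
lemma fin5_4 : (⟨4, by omega⟩ : Fin 5) = 4 := rfl

set_option maxHeartbeats 4000000 in
lemma key (μ lam : Bil 5)
    (hμ : ∀ i j : Fin 5, μ (e i) (e j) = tblA13 i j)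
    (hlam : ∀ i j : Fin 5, lam (e i) (e j) = tblA21 i j)
    (c : ℂ) (hc : c ≠ 0) :
    act (G c hc) μ = lam + c ^ 3 • D := by
  have hsymm : ∀ x : Vn 5, (G c hc).symm x = ![x 0, x 3, c * x 1, c⁻¹ * x 2, x 4] := fun _ => rfl
  have happ : ∀ x : Vn 5, G c hc x = ![x 0, c⁻¹ * x 2, c * x 3, x 1, x 4] := fun _ => rfl
  have hs0 : (G c hc).symm (e 0) = e 0 := by rw [hsymm]; funext k; fin_cases k <;> simp [e]
  have hs1 : (G c hc).symm (e 1) = c • e 2 := by rw [hsymm]; funext k; fin_cases k <;> simp [e]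
  have hs2 : (G c hc).symm (e 2) = c⁻¹ • e 3 := by rw [hsymm]; funext k; fin_cases k <;> simp [e]
  have hs3 : (G c hc).symm (e 3) = e 1 := by rw [hsymm]; funext k; fin_cases k <;> simp [e]
  have hs4 : (G c hc).symm (e 4) = e 4 := by rw [hsymm]; funext k; fin_cases k <;> simp [e]
  have hg0 : G c hc (e 0) = e 0 := by rw [happ]; funext k; fin_cases k <;> simp [e]
  have hg1 : G c hc (e 1) = e 3 := by rw [happ]; funext k; fin_cases k <;> simp [e]
  have hg2 : G c hc (e 2) = c⁻¹ • e 1 := by rw [happ]; funext k; fin_cases k <;> simp [e]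
  have hg3 : G c hc (e 3) = c • e 2 := by rw [happ]; funext k; fin_cases k <;> simp [e]
  have hg4 : G c hc (e 4) = e 4 := by rw [happ]; funext k; fin_cases k <;> simp [e]
  have m00 : μ (e 0) (e 0) = 0 := (hμ 0 0).trans rfl
  have m01 : μ (e 0) (e 1) = e 4 := (hμ 0 1).trans rfl
  have m02 : μ (e 0) (e 2) = 0 := (hμ 0 2).trans rfl
  have m03 : μ (e 0) (e 3) = 0 := (hμ 0 3).trans rfl
  have m04 : μ (e 0) (e 4) = 0 := (hμ 0 4).trans rfl
  have m10 : μ (e 1) (e 0) = e 4 := (hμ 1 0).trans rfl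
  have m11 : μ (e 1) (e 1) = 0 := (hμ 1 1).trans rfl
  have m12 : μ (e 1) (e 2) = 0 := (hμ 1 2).trans rfl
  have m13 : μ (e 1) (e 3) = 0 := (hμ 1 3).trans rfl
  have m14 : μ (e 1) (e 4) = 0 := (hμ 1 4).trans rfl
  have m20 : μ (e 2) (e 0) = 0 := (hμ 2 0).trans rfl
  have m21 : μ (e 2) (e 1) = 0 := (hμ 2 1).trans rfl
  have m22 : μ (e 2) (e 2) = e 3 := (hμ 2 2).trans rfl
  have m23 : μ (e 2) (e 3) = e 4 := (hμ 2 3).trans rfl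
  have m24 : μ (e 2) (e 4) = 0 := (hμ 2 4).trans rfl
  have m30 : μ (e 3) (e 0) = 0 := (hμ 3 0).trans rfl
  have m31 : μ (e 3) (e 1) = 0 := (hμ 3 1).trans rfl
  have m32 : μ (e 3) (e 2) = e 4 := (hμ 3 2).trans rfl
  have m33 : μ (e 3) (e 3) = 0 := (hμ 3 3).trans rfl
  have m34 : μ (e 3) (e 4) = 0 := (hμ 3 4).trans rfl
  have m40 : μ (e 4) (e 0) = 0 := (hμ 4 0).trans rfl
  have m41 : μ (e 4) (e 1) = 0 := (hμ 4 1).trans rfl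
  have m42 : μ (e 4) (e 2) = 0 := (hμ 4 2).trans rfl
  have m43 : μ (e 4) (e 3) = 0 := (hμ 4 3).trans rfl
  have m44 : μ (e 4) (e 4) = 0 := (hμ 4 4).trans rfl
  have l00 : lam (e 0) (e 0) = 0 := (hlam 0 0).trans rfl
  have l01 : lam (e 0) (e 1) = 0 := (hlam 0 1).trans rfl
  have l02 : lam (e 0) (e 2) = 0 := (hlam 0 2).trans rfl
  have l03 : lam (e 0) (e 3) = e 4 := (hlam 0 3).trans rfl
  have l04 : lam (e 0) (e 4) = 0 := (hlam 0 4).trans rfl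
  have l10 : lam (e 1) (e 0) = 0 := (hlam 1 0).trans rfl
  have l11 : lam (e 1) (e 1) = 0 := (hlam 1 1).trans rfl
  have l12 : lam (e 1) (e 2) = e 4 := (hlam 1 2).trans rfl
  have l13 : lam (e 1) (e 3) = 0 := (hlam 1 3).trans rfl
  have l14 : lam (e 1) (e 4) = 0 := (hlam 1 4).trans rfl
  have l20 : lam (e 2) (e 0) = 0 := (hlam 2 0).trans rfl
  have l21 : lam (e 2) (e 1) = e 4 := (hlam 2 1).trans rfl
  have l22 : lam (e 2) (e 2) = 0 := (hlam 2 2).trans rfl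
  have l23 : lam (e 2) (e 3) = 0 := (hlam 2 3).trans rfl
  have l24 : lam (e 2) (e 4) = 0 := (hlam 2 4).trans rfl
  have l30 : lam (e 3) (e 0) = e 4 := (hlam 3 0).trans rfl
  have l31 : lam (e 3) (e 1) = 0 := (hlam 3 1).trans rfl
  have l32 : lam (e 3) (e 2) = 0 := (hlam 3 2).trans rfl
  have l33 : lam (e 3) (e 3) = 0 := (hlam 3 3).trans rfl
  have l34 : lam (e 3) (e 4) = 0 := (hlam 3 4).trans rfl
  have l40 : lam (e 4) (e 0) = 0 := (hlam 4 0).trans rfl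
  have l41 : lam (e 4) (e 1) = 0 := (hlam 4 1).trans rfl
  have l42 : lam (e 4) (e 2) = 0 := (hlam 4 2).trans rfl
  have l43 : lam (e 4) (e 3) = 0 := (hlam 4 3).trans rfl
  have l44 : lam (e 4) (e 4) = 0 := (hlam 4 4).trans rfl
  have d00 : D (e 0) (e 0) = 0 := by simp [D, e]
  have d01 : D (e 0) (e 1) = 0 := by simp [D, e]
  have d02 : D (e 0) (e 2) = 0 := by simp [D, e]
  have d03 : D (e 0) (e 3) = 0 := by simp [D, e]
  have d04 : D (e 0) (e 4) = 0 := by simp [D, e]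
  have d10 : D (e 1) (e 0) = 0 := by simp [D, e]
  have d11 : D (e 1) (e 1) = e 2 := by simp [D, e]
  have d12 : D (e 1) (e 2) = 0 := by simp [D, e]
  have d13 : D (e 1) (e 3) = 0 := by simp [D, e]
  have d14 : D (e 1) (e 4) = 0 := by simp [D, e]
  have d20 : D (e 2) (e 0) = 0 := by simp [D, e]
  have d21 : D (e 2) (e 1) = 0 := by simp [D, e]
  have d22 : D (e 2) (e 2) = 0 := by simp [D, e]
  have d23 : D (e 2) (e 3) = 0 := by simp [D, e]
  have d24 : D (e 2) (e 4) = 0 := by simp [D, e]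
  have d30 : D (e 3) (e 0) = 0 := by simp [D, e]
  have d31 : D (e 3) (e 1) = 0 := by simp [D, e]
  have d32 : D (e 3) (e 2) = 0 := by simp [D, e]
  have d33 : D (e 3) (e 3) = 0 := by simp [D, e]
  have d34 : D (e 3) (e 4) = 0 := by simp [D, e]
  have d40 : D (e 4) (e 0) = 0 := by simp [D, e]
  have d41 : D (e 4) (e 1) = 0 := by simp [D, e]
  have d42 : D (e 4) (e 2) = 0 := by simp [D, e]
  have d43 : D (e 4) (e 3) = 0 := by simp [D, e]
  have d44 : D (e 4) (e 4) = 0 := by simp [D, e]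
  apply bil_ext
  intro i j
  fin_cases i <;> fin_cases j <;>
    simp only [fin5_0, fin5_1, fin5_2, fin5_3, fin5_4] <;>
    simp only [act_apply, ContinuousLinearMap.add_apply, ContinuousLinearMap.smul_apply,
      hs0, hs1, hs2, hs3, hs4, map_smul, map_zero, m00, m01, m02, m03, m04, m10, m11, m12, m13, m14, m20, m21, m22, m23, m24, m30, m31, m32, m33, m34, m40, m41, m42, m43, m44,
      hg0, hg1, hg2, hg3, hg4, l00, l01, l02, l03, l04, l10, l11, l12, l13, l14, l20, l21, l22, l23, l24, l30, l31, l32, l33, l34, l40, l41, l42, l43, l44, d00, d01, d02, d03, d04, d10, d11, d12, d13, d14, d20, d21, d22, d23, d24, d30, d31, d32, d33, d34, d40, d41, d42, d43, d44,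
      smul_zero, add_zero, zero_add, smul_smul] <;>
    first
      | rfl
      | simp [mul_inv_cancel₀ hc, pow_three, mul_comm, mul_assoc, mul_left_comm]

set_option maxHeartbeats 1000000
set_option synthInstance.maxHeartbeats 1000000

/-- The $5$-dimensional nilpotent commutative associative algebra `𝐀13` degenerates to
`𝐀21`: the structure `λ` of `𝐀21` lies in the closure of
the `GL(5, ℂ)`-orbit `O(μ)` of the structure `μ` of `𝐀13`. -/
theorem A13_deg_A21 (μ lam : Bil 5)
    (hμ : ∀ i j : Fin 5, μ (e i) (e j) = tblA13 i j)
    (hlam : ∀ i j : Fin 5, lam (e i) (e j) = tblA21 i j) :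
    lam ∈ closure (orbit μ) := by
  have hc : ∀ n : ℕ, ((n : ℂ) + 1)⁻¹ ≠ 0 := by
    intro n
    have h : ((n : ℂ) + 1) = ((n + 1 : ℕ) : ℂ) := by push_cast; ring
    rw [h]
    exact inv_ne_zero (Nat.cast_ne_zero.mpr (Nat.succ_ne_zero n))
  set F : ℕ → Bil 5 := fun n => lam + (((n : ℂ) + 1)⁻¹) ^ 3 • D with hF
  have hmem : ∀ n, F n ∈ orbit μ := fun n =>
    ⟨G ((n : ℂ) + 1)⁻¹ (hc n), (key μ lam hμ hlam _ (hc n)).symm⟩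
  have h1 : Filter.Tendsto (fun n : ℕ => ((n : ℂ) + 1)⁻¹) Filter.atTop (nhds 0) := by
    have h0 : Filter.Tendsto (fun n : ℕ => (((n : ℝ) + 1)⁻¹ : ℝ)) Filter.atTop (nhds 0) := by
      simpa [one_div] using tendsto_one_div_add_atTop_nhds_zero_nat (𝕜 := ℝ)
    have h2 := (Complex.continuous_ofReal.tendsto (0 : ℝ)).comp h0
    rw [Complex.ofReal_zero] at h2
    refine h2.congr fun n => ?_
    simp [Function.comp]
  haveI : ContinuousAdd (Bil 5) := (inferInstance : IsTopologicalAddGroup (Bil 5)).toContinuousAdd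
  have htend : Filter.Tendsto F Filter.atTop (nhds lam) := by
    have h3 : Filter.Tendsto (fun n : ℕ => lam + (((n : ℂ) + 1)⁻¹) ^ 3 • D)
        Filter.atTop (nhds (lam + (0 : ℂ) ^ 3 • D)) :=
      tendsto_const_nhds.add (((h1.pow 3).smul_const D))
    have h0 : ((0 : ℂ) • D) = (0 : Bil 5) := by ext x y; simp
    have heq : lam + (0 : ℂ) ^ 3 • D = lam := by
      rw [zero_pow (by norm_num), h0]
      ext x y
      simp
    rw [heq] at h3
    exact h3
  exact mem_closure_of_tendsto htend (Filter.Eventually.of_forall hmem)
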